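/- (The fixed point of T is a componentwise lower bound for V.) If v* ∈ ℝ^S satisfies Tv* = v*, then for every v ∈ ℝ^S with Tv ≤ v one has v* ≤ v (componentwise); that is, v* ≤ v for all v ∈ V. -/
import Mathlib


noncomputable def Tval {S : Type*} [Fintype S] {A : S → Type*}
    [∀ i, Fintype (A i)] [∀ i, Nonempty (A i)]
    (r : ∀ i, A i → ℝ) (p : ∀ i, A i → S → ℝ) (lam : ℝ) (v : S → ℝ) (i : S) : ℝ :=
  Finset.univ.sup' Finset.univ_nonempty fun a : A i =>
    r i a + lam * ∑ j, p i a j * v j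

theorem fixedPoint_le_of_mem_V {S : Type*} [Fintype S] [Nonempty S] {A : S → Type*}
    [∀ i, Fintype (A i)] [∀ i, Nonempty (A i)]
    (r : ∀ i, A i → ℝ) (p : ∀ i, A i → S → ℝ) (lam : ℝ)
    (hp : ∀ i (a : A i) (j : S), 0 ≤ p i a j)
    (hp1 : ∀ i (a : A i), ∑ j, p i a j = 1)
    (hlam0 : 0 ≤ lam) (hlam1 : lam < 1)
    (vstar : S → ℝ) (hfix : ∀ i, Tval r p lam vstar i = vstar i) :
    ∀ v : S → ℝ, (∀ i, Tval r p lam v i ≤ v i) → ∀ i, vstar i ≤ v i := by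
  intro v hv i
  -- Let M be the max of vstar - v
  obtain ⟨i0, -, hi0⟩ := Finset.exists_max_image (Finset.univ : Finset S)
    (fun j => vstar j - v j) Finset.univ_nonempty
  set M := vstar i0 - v i0 with hM
  have hle : ∀ j, vstar j ≤ v j + M := by
    intro j
    have := hi0 j (Finset.mem_univ j)
    linarith
  -- pick maximizing action at i0 for vstar
  obtain ⟨a, -, ha⟩ := Finset.exists_mem_eq_sup' (Finset.univ_nonempty (α := A i0))
    (fun a : A i0 => r i0 a + lam * ∑ j, p i0 a j * vstar j)
  have hfix0 : vstar i0 = r i0 a + lam * ∑ j, p i0 a j * vstar j := by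
    rw [← hfix i0]; exact ha
  have hsum : ∑ j, p i0 a j * vstar j ≤ (∑ j, p i0 a j * v j) + M := by
    calc ∑ j, p i0 a j * vstar j ≤ ∑ j, p i0 a j * (v j + M) := by
          apply Finset.sum_le_sum
          intro j _
          exact mul_le_mul_of_nonneg_left (hle j) (hp i0 a j)
      _ = (∑ j, p i0 a j * v j) + M := by
          simp [mul_add, Finset.sum_add_distrib, ← Finset.sum_mul, hp1 i0 a]
  have hTv : r i0 a + lam * ∑ j, p i0 a j * v j ≤ v i0 := by
    refine le_trans ?_ (hv i0)
    exact Finset.le_sup' (fun a : A i0 => r i0 a + lam * ∑ j, p i0 a j * v j)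
      (Finset.mem_univ a)
  have hMle : M ≤ lam * M := by
    have : vstar i0 ≤ r i0 a + lam * ((∑ j, p i0 a j * v j) + M) := by
      rw [hfix0]; nlinarith
    nlinarith
  have hM0 : M ≤ 0 := by nlinarith
  have := hi0 i (Finset.mem_univ i)
  linarith
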